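/- Let A₁ : H → H₁ and A₂ : H → H₂ be bounded linear operators between Hilbert spaces, with A₂ surjective. Then the operator A = (A₁, A₂) : H → H₁ ⊕ H₂ is Fredholm if and only if the restriction of A₁ to ker A₂ (as an operator ker A₂ → H₁) is Fredholm, and in that case ind A = ind (A₁|_{ker A₂}). -/

import Mathlib

open Module

/-- A bounded operator is Fredholm if its kernel is finite dimensional and its range
is closed with finite-dimensional cokernel. -/
def IsFredholm {H H' : Type*} [NormedAddCommGroup H] [NormedSpace ℂ H]
    [NormedAddCommGroup H'] [NormedSpace ℂ H'] (T : H →L[ℂ] H') : Prop :=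
  FiniteDimensional ℂ (LinearMap.ker (T : H →ₗ[ℂ] H')) ∧ IsClosed (LinearMap.range (T : H →ₗ[ℂ] H') : Set H') ∧
    FiniteDimensional ℂ (H' ⧸ LinearMap.range (T : H →ₗ[ℂ] H'))

/-- The Fredholm index: `dim ker - dim coker`. -/
noncomputable def fredIndex {H H' : Type*} [NormedAddCommGroup H] [NormedSpace ℂ H]
    [NormedAddCommGroup H'] [NormedSpace ℂ H'] (T : H →L[ℂ] H') : ℤ :=
  (finrank ℂ (LinearMap.ker (T : H →ₗ[ℂ] H')) : ℤ) - (finrank ℂ (H' ⧸ LinearMap.range (T : H →ₗ[ℂ] H')) : ℤ)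

/-- If `A₂ : H → H₂` is surjective, then `A = (A₁, A₂) : H → H₁ ⊕ H₂` is
Fredholm iff the restriction of `A₁` to `ker A₂` is Fredholm, and the indices agree. -/
theorem fredholm_prod_iff_restrict
    {H H₁ H₂ : Type*} [NormedAddCommGroup H] [InnerProductSpace ℂ H] [CompleteSpace H]
    [NormedAddCommGroup H₁] [InnerProductSpace ℂ H₁] [CompleteSpace H₁]
    [NormedAddCommGroup H₂] [InnerProductSpace ℂ H₂] [CompleteSpace H₂]
    (A₁ : H →L[ℂ] H₁) (A₂ : H →L[ℂ] H₂) (hA₂ : Function.Surjective A₂) :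
    (IsFredholm (A₁.prod A₂) ↔
      IsFredholm (A₁.comp (Submodule.subtypeL (LinearMap.ker (A₂ : H →ₗ[ℂ] H₂))))) ∧
    (IsFredholm (A₁.prod A₂) →
      fredIndex (A₁.prod A₂) = fredIndex (A₁.comp (Submodule.subtypeL (LinearMap.ker (A₂ : H →ₗ[ℂ] H₂))))) := by
  classical
  set R := A₁.comp (Submodule.subtypeL (LinearMap.ker (A₂ : H →ₗ[ℂ] H₂))) with hRdef
  set T := A₁.prod A₂ with hTdef
  have memT : ∀ h : H, h ∈ LinearMap.ker (T : H →ₗ[ℂ] H₁ × H₂) ↔ A₁ h = 0 ∧ A₂ h = 0 := fun h => by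
    simp [hTdef, LinearMap.mem_ker, Prod.ext_iff]
  have memR : ∀ x : LinearMap.ker (A₂ : H →ₗ[ℂ] H₂), x ∈ LinearMap.ker (R : LinearMap.ker (A₂ : H →ₗ[ℂ] H₂) →ₗ[ℂ] H₁) ↔ A₁ (x : H) = 0 := fun x => by
    simp [hRdef, LinearMap.mem_ker]
  -- kernel equivalence
  let eker : (LinearMap.ker (R : LinearMap.ker (A₂ : H →ₗ[ℂ] H₂) →ₗ[ℂ] H₁)) ≃ₗ[ℂ] (LinearMap.ker (T : H →ₗ[ℂ] H₁ × H₂)) :=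
  { toFun := fun x => ⟨((x : LinearMap.ker (A₂ : H →ₗ[ℂ] H₂)) : H), (memT _).2 ⟨(memR _).1 x.2, (x : LinearMap.ker (A₂ : H →ₗ[ℂ] H₂)).2⟩⟩
    map_add' := fun x y => rfl
    map_smul' := fun c x => rfl
    invFun := fun h => ⟨⟨(h : H), ((memT _).1 h.2).2⟩, (memR _).2 ((memT _).1 h.2).1⟩
    left_inv := fun x => rfl
    right_inv := fun h => rfl }
  -- cokernel equivalence
  let φ : H₁ →ₗ[ℂ] ((H₁ × H₂) ⧸ LinearMap.range (T : H →ₗ[ℂ] H₁ × H₂)) :=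
    (LinearMap.range (T : H →ₗ[ℂ] H₁ × H₂)).mkQ ∘ₗ LinearMap.inl ℂ H₁ H₂
  have hφker : LinearMap.ker φ = LinearMap.range (R : LinearMap.ker (A₂ : H →ₗ[ℂ] H₂) →ₗ[ℂ] H₁) := by
    ext x
    simp only [φ, LinearMap.mem_ker, LinearMap.comp_apply, LinearMap.inl_apply,
      Submodule.mkQ_apply, Submodule.Quotient.mk_eq_zero, LinearMap.mem_range]
    constructor
    · rintro ⟨h, hh⟩
      have h1 : A₁ h = x := congrArg Prod.fst hh
      have h2 : A₂ h = 0 := congrArg Prod.snd hh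
      exact ⟨⟨h, h2⟩, h1⟩
    · rintro ⟨⟨h, hh2⟩, hh1⟩
      exact ⟨h, Prod.ext hh1 hh2⟩
  have hφsurj : Function.Surjective φ := by
    intro q
    obtain ⟨p, rfl⟩ := Submodule.mkQ_surjective _ q
    obtain ⟨h, hh⟩ := hA₂ p.2
    refine ⟨p.1 - A₁ h, ?_⟩
    show Submodule.Quotient.mk ((p.1 - A₁ h, (0:H₂)) : H₁ × H₂) = Submodule.Quotient.mk p
    rw [Submodule.Quotient.eq]
    exact ⟨-h, by simp [hTdef, hh, Prod.ext_iff]⟩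
  let ecoker : (H₁ ⧸ LinearMap.range (R : LinearMap.ker (A₂ : H →ₗ[ℂ] H₂) →ₗ[ℂ] H₁)) ≃ₗ[ℂ] ((H₁ × H₂) ⧸ LinearMap.range (T : H →ₗ[ℂ] H₁ × H₂)) :=
    (Submodule.quotEquivOfEq _ _ hφker.symm).trans (φ.quotKerEquivOfSurjective hφsurj)
  -- bounded right inverse of A₂
  have hKclosed : IsClosed ((LinearMap.ker (A₂ : H →ₗ[ℂ] H₂) : Submodule ℂ H) : Set H) :=
    ContinuousLinearMap.isClosed_ker A₂
  haveI : CompleteSpace (LinearMap.ker (A₂ : H →ₗ[ℂ] H₂)) := hKclosed.completeSpace_coe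
  haveI : CompleteSpace ((LinearMap.ker (A₂ : H →ₗ[ℂ] H₂))ᗮ : Submodule ℂ H) :=
    (Submodule.isClosed_orthogonal _).completeSpace_coe
  let f : ((LinearMap.ker (A₂ : H →ₗ[ℂ] H₂))ᗮ : Submodule ℂ H) →L[ℂ] H₂ :=
    A₂.comp (Submodule.subtypeL _)
  have hfinj : LinearMap.ker (f : (LinearMap.ker (A₂ : H →ₗ[ℂ] H₂))ᗮ →ₗ[ℂ] H₂) = ⊥ := by
    ext x
    simp only [LinearMap.mem_ker, Submodule.mem_bot]
    constructor
    · intro hx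
      have hxK : (x : H) ∈ LinearMap.ker (A₂ : H →ₗ[ℂ] H₂) := hx
      have h0 : (inner ℂ ((x : H)) ((x : H)) : ℂ) = 0 :=
        (Submodule.mem_orthogonal _ _).1 x.2 _ hxK
      exact Subtype.ext (inner_self_eq_zero.1 h0)
    · rintro rfl; exact map_zero f
  have hfsurj : LinearMap.range (f : (LinearMap.ker (A₂ : H →ₗ[ℂ] H₂))ᗮ →ₗ[ℂ] H₂) = ⊤ := by
    rw [LinearMap.range_eq_top]
    intro y
    obtain ⟨h, hh⟩ := hA₂ y
    obtain ⟨k, hk, p, hp, hsum⟩ := (LinearMap.ker (A₂ : H →ₗ[ℂ] H₂)).exists_add_mem_mem_orthogonal h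
    refine ⟨⟨p, hp⟩, ?_⟩
    have : A₂ h = A₂ k + A₂ p := by rw [hsum]; simp
    have hk0 : A₂ k = 0 := hk
    simp only [f, ContinuousLinearMap.comp_apply, Submodule.subtypeL_apply]
    rw [← hh, this, hk0, zero_add]
    rfl
  let e := ContinuousLinearEquiv.ofBijective f hfinj hfsurj
  let S : H₂ →L[ℂ] H :=
    ((LinearMap.ker (A₂ : H →ₗ[ℂ] H₂))ᗮ).subtypeL.comp
      (e.symm : H₂ →L[ℂ] ((LinearMap.ker (A₂ : H →ₗ[ℂ] H₂))ᗮ : Submodule ℂ H))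
  have hS : ∀ y, A₂ (S y) = y := fun y => by
    have h1 : f (e.symm y) = y := by
      simpa [e, ContinuousLinearEquiv.coe_ofBijective] using e.apply_symm_apply y
    simpa [S, f] using h1
  -- range characterizations
  have hmemTR : ∀ p : H₁ × H₂,
      p ∈ LinearMap.range (T : H →ₗ[ℂ] H₁ × H₂) ↔ (p.1 - A₁ (S p.2)) ∈ LinearMap.range (R : LinearMap.ker (A₂ : H →ₗ[ℂ] H₂) →ₗ[ℂ] H₁) := by
    rintro ⟨x, y⟩
    simp only [LinearMap.mem_range]
    constructor
    · rintro ⟨h, hh⟩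
      have h1 : A₁ h = x := congrArg Prod.fst hh
      have h2 : A₂ h = y := congrArg Prod.snd hh
      refine ⟨⟨h - S y, ?_⟩, ?_⟩
      · simp [LinearMap.mem_ker, h2, hS]
      · show A₁ (h - S y) = x - A₁ (S y)
        rw [map_sub, h1]
    · rintro ⟨⟨k, hk⟩, hkx⟩
      have hk0 : A₂ k = 0 := hk
      have hkx' : A₁ k = x - A₁ (S y) := hkx
      refine ⟨k + S y, Prod.ext ?_ ?_⟩
      · show A₁ (k + S y) = x
        rw [map_add, hkx']; abel
      · show A₂ (k + S y) = y
        rw [map_add, hk0, hS, zero_add]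
  have hmemRT : ∀ x : H₁, x ∈ LinearMap.range (R : LinearMap.ker (A₂ : H →ₗ[ℂ] H₂) →ₗ[ℂ] H₁) ↔ ((x, (0:H₂)) ∈ LinearMap.range (T : H →ₗ[ℂ] H₁ × H₂)) := by
    intro x
    rw [hmemTR (x, 0)]
    simp
  have hclosed_iff : IsClosed (LinearMap.range (T : H →ₗ[ℂ] H₁ × H₂) : Set (H₁ × H₂)) ↔
      IsClosed (LinearMap.range (R : LinearMap.ker (A₂ : H →ₗ[ℂ] H₂) →ₗ[ℂ] H₁) : Set H₁) := by
    constructor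
    · intro hc
      have hset : (LinearMap.range (R : LinearMap.ker (A₂ : H →ₗ[ℂ] H₂) →ₗ[ℂ] H₁) : Set H₁) =
          (fun x : H₁ => ((x, (0:H₂)))) ⁻¹' (LinearMap.range (T : H →ₗ[ℂ] H₁ × H₂) : Set (H₁ × H₂)) := by
        ext x; exact hmemRT x
      rw [hset]
      exact hc.preimage (continuous_id.prodMk continuous_const)
    · intro hc
      have hset : (LinearMap.range (T : H →ₗ[ℂ] H₁ × H₂) : Set (H₁ × H₂)) =
          (fun p : H₁ × H₂ => p.1 - A₁ (S p.2)) ⁻¹' (LinearMap.range (R : LinearMap.ker (A₂ : H →ₗ[ℂ] H₂) →ₗ[ℂ] H₁) : Set H₁) := by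
        ext p; exact hmemTR p
      rw [hset]
      exact hc.preimage (continuous_fst.sub ((A₁.continuous.comp S.continuous).comp continuous_snd))
  constructor
  · constructor
    · rintro ⟨h1, h2, h3⟩
      refine ⟨?_, hclosed_iff.1 h2, ?_⟩
      · exact eker.symm.finiteDimensional
      · exact ecoker.symm.finiteDimensional
    · rintro ⟨h1, h2, h3⟩
      refine ⟨?_, hclosed_iff.2 h2, ?_⟩
      · exact eker.finiteDimensional
      · exact ecoker.finiteDimensional
  · intro _
    unfold fredIndex
    rw [eker.finrank_eq, ecoker.finrank_eq]
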